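/- If μ is a singular strong limit cardinal and G is a locally finite group of cardinality μ, then the set {M : M is a subgroup of G of cardinality < μ which is cf(μ)-indecomposable} has cardinality at most μ. -/

import Mathlib

universe u
open Cardinal

/-- A group is locally finite if every finitely generated subgroup is finite. -/
def LocallyFiniteGroup (G : Type u) [Group G] : Prop :=
  ∀ s : Finset G, Set.Finite ((Subgroup.closure (s : Set G) : Subgroup G) : Set G)

/-- A group `G` is `θ`-indecomposable when every `⊆`-increasing sequence
`⟨M_i : i < θ⟩` of subgroups of `G` with union `G` contains `G` as a member. -/
def GroupIndecomp (θ : Cardinal.{u}) (G : Type u) [Group G] : Prop :=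
  ∀ M : θ.ord.ToType → Subgroup G, Monotone M → (⨆ i, M i) = ⊤ → ∃ i, M i = ⊤

/-- `θ` is a Jonsson cardinal: for every function `f` from the finite subsets of `θ` to `θ`
there is a subset `H ⊆ θ` of cardinality `θ` such that `f` restricted to the finite subsets
of `H` omits some value `< θ`. -/
def IsJonssonCard (θ : Cardinal.{u}) : Prop :=
  ∀ f : Finset θ.ord.ToType → θ.ord.ToType,
    ∃ H : Set θ.ord.ToType, #H = θ ∧
      ∃ y : θ.ord.ToType, ∀ s : Finset θ.ord.ToType, ↑s ⊆ H → f s ≠ y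

/-- The set `Θ_λ`: it is `{cf λ, cf μ}` if `λ = μ⁺` for a singular `μ` which is the supremum
of the regular Jonsson cardinals below it, and `{cf λ}` otherwise. -/
def ThetaSet (lam : Cardinal.{u}) : Set Cardinal.{u} :=
  {θ | θ = lam.ord.cof ∨
    ∃ μ : Cardinal.{u}, lam = Order.succ μ ∧ ℵ₀ ≤ μ ∧ μ.ord.cof < μ ∧
      μ = sSup {κ | κ < μ ∧ κ.IsRegular ∧ IsJonssonCard κ} ∧ θ = μ.ord.cof}

/-- Every element of the closure of `S` lies in the closure of a finite subset of `S`. -/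
lemma exists_finset_of_mem_closure_aux {G : Type u} [Group G] {S : Set G} {x : G}
    (hx : x ∈ Subgroup.closure S) :
    ∃ F : Finset G, ↑F ⊆ S ∧ x ∈ Subgroup.closure (F : Set G) := by
  classical
  induction hx using Subgroup.closure_induction with
  | mem y hy =>
      exact ⟨{y}, by simpa using hy, Subgroup.subset_closure (by simp)⟩
  | one => exact ⟨∅, by simp, Subgroup.one_mem _⟩
  | mul y z hy hz ihy ihz =>
      obtain ⟨F, hF, hyF⟩ := ihy
      obtain ⟨F', hF', hzF⟩ := ihz
      refine ⟨F ∪ F', ?_, Subgroup.mul_mem _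
        (Subgroup.closure_mono (by simp [Finset.coe_union]) hyF)
        (Subgroup.closure_mono (by simp [Finset.coe_union]) hzF)⟩
      rw [Finset.coe_union]
      exact Set.union_subset hF hF'
  | inv y hy ihy =>
      obtain ⟨F, hF, hyF⟩ := ihy
      exact ⟨F, hF, Subgroup.inv_mem _ hyF⟩

/-- In a locally finite group, the subgroup generated by `S` has cardinality at most
`max #S ℵ₀`. -/
lemma mk_closure_le_of_locallyFinite {G : Type u} [Group G] (hG : LocallyFiniteGroup G)
    (S : Set G) : #(Subgroup.closure S) ≤ max #S ℵ₀ := by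
  classical
  set U : Finset S → Set G := fun F =>
    ((Subgroup.closure ((F.image Subtype.val : Finset G) : Set G) : Subgroup G) : Set G) with hU
  have hsub : ((Subgroup.closure S : Subgroup G) : Set G) ⊆ ⋃ F : Finset S, U F := by
    intro x hx
    obtain ⟨F, hFS, hxF⟩ := exists_finset_of_mem_closure_aux hx
    refine Set.mem_iUnion.2 ⟨F.subtype (· ∈ S), ?_⟩
    have himg : ((F.subtype (· ∈ S)).image Subtype.val : Finset G) = F := by
      ext y
      simp only [Finset.mem_image, Finset.mem_subtype]
      constructor
      · rintro ⟨z, hz, rfl⟩; exact hz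
      · intro hy; exact ⟨⟨y, hFS hy⟩, hy, rfl⟩
    show x ∈ U _
    rw [hU]
    simp only [himg]
    exact hxF
  have hUfin : ∀ F : Finset S, #(U F) ≤ ℵ₀ := by
    intro F
    have hfin : (U F).Finite := hG (F.image Subtype.val)
    haveI := hfin.to_subtype
    exact (Cardinal.lt_aleph0_of_finite _).le
  have h1 : #(Subgroup.closure S) ≤ #(⋃ F : Finset S, U F) :=
    Cardinal.mk_le_mk_of_subset hsub
  have h2 : #(⋃ F : Finset S, U F) ≤ #(Finset S) * ⨆ F : Finset S, #(U F) :=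
    Cardinal.mk_iUnion_le U
  have h3 : (⨆ F : Finset S, #(U F)) ≤ ℵ₀ := ciSup_le' hUfin
  have h4 : #(Finset S) ≤ max #S ℵ₀ := by
    rcases finite_or_infinite S with hfin | hinf
    · haveI := hfin
      haveI : Finite (Finset S) :=
        Finite.of_injective (fun F : Finset S => (F : Set S)) Finset.coe_injective
      exact le_max_of_le_right (Cardinal.lt_aleph0_of_finite _).le
    · haveI := hinf
      rw [Cardinal.mk_finset_of_infinite]
      exact le_max_left _ _
  calc #(Subgroup.closure S) ≤ #(Finset S) * ⨆ F : Finset S, #(U F) := h1.trans h2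
    _ ≤ (max #S ℵ₀) * ℵ₀ := mul_le_mul' h4 h3
    _ = max #S ℵ₀ := Cardinal.mul_eq_left (le_max_right _ _) (le_max_right _ _)
        Cardinal.aleph0_ne_zero

/-- Helper for injectivity of the sigma-type encoding. -/
lemma sigma_encode_inj {G : Type u} [Group G] {ι : Type u} (Gf : ι → Subgroup G)
    (M₁ M₂ : Subgroup G) (i₁ i₂ : ι) (h₁ : M₁ ≤ Gf i₁) (h₂ : M₂ ≤ Gf i₂)
    (hEq : (⟨i₁, {x : ↥(Gf i₁) | (x : G) ∈ M₁}⟩ : Σ i, Set ↥(Gf i)) =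
      ⟨i₂, {x : ↥(Gf i₂) | (x : G) ∈ M₂}⟩) : M₁ = M₂ := by
  obtain ⟨rfl, hs⟩ := Sigma.mk.inj_iff.1 hEq
  have hs' := eq_of_heq hs
  ext x
  constructor
  · intro hx
    have hmem : (⟨x, h₁ hx⟩ : ↥(Gf i₁)) ∈ {x : ↥(Gf i₁) | (x : G) ∈ M₁} := hx
    rw [hs'] at hmem
    exact hmem
  · intro hx
    have hmem : (⟨x, h₂ hx⟩ : ↥(Gf i₁)) ∈ {x : ↥(Gf i₁) | (x : G) ∈ M₂} := hx
    rw [← hs'] at hmem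
    exact hmem

/-- If `μ` is a singular strong limit cardinal and `G` a locally finite
group of cardinality `μ`, the set of `cf(μ)`-indecomposable subgroups of `G` of cardinality
`< μ` has cardinality at most `μ`. -/
theorem card_indecomposable_subgroups_le (μ : Cardinal.{u})
    (hsl : μ.IsStrongLimit) (hsing : μ.ord.cof < μ)
    (G : Type u) [Group G] (hG : LocallyFiniteGroup G) (hGc : #G = μ) :
    #{M : Subgroup G // #M < μ ∧ GroupIndecomp μ.ord.cof ↥M} ≤ μ := by
  classical
  haveI : IsWellOrder μ.ord.ToType (· < ·) := isWellOrder_lt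
  haveI : IsWellOrder (μ.ord.cof).ord.ToType (· < ·) := isWellOrder_lt
  have hμ0 : ℵ₀ ≤ μ := hsl.aleph0_le
  have hlim : Order.IsSuccLimit μ.ord := Cardinal.isSuccLimit_ord hμ0
  have hθ0 : ℵ₀ ≤ μ.ord.cof := Ordinal.aleph0_le_cof.2 hlim
  have haleph : ℵ₀ < μ := hθ0.trans_lt hsing
  have hmkμ : #(μ.ord.ToType) = μ := by rw [Cardinal.mk_toType, Cardinal.card_ord]
  have hmkθ : #((μ.ord.cof).ord.ToType) = μ.ord.cof := by
    rw [Cardinal.mk_toType, Cardinal.card_ord]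
  obtain ⟨e⟩ : Nonempty (G ≃ μ.ord.ToType) := Cardinal.eq.1 (by rw [hGc, hmkμ])
  obtain ⟨S, hSunb, hScard⟩ :=
    Order.exists_cof_eq (α := μ.ord.ToType)
  rw [Ordinal.cof_toType] at hScard
  obtain ⟨h⟩ : Nonempty ((μ.ord.cof).ord.ToType ≃ S) := Cardinal.eq.1 (by rw [hmkθ, hScard])
  set g : (μ.ord.cof).ord.ToType → μ.ord.ToType := fun j => (h j : μ.ord.ToType) with hg
  set T : (μ.ord.cof).ord.ToType → Set G := fun i => {x | ∃ j ≤ i, e x ≤ g j} with hT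
  set Gf : (μ.ord.cof).ord.ToType → Subgroup G := fun i => Subgroup.closure (T i) with hGfdef
  have hTmono : Monotone T := by
    intro i i' hii' x hx
    obtain ⟨j, hj, hxj⟩ := hx
    exact ⟨j, hj.trans hii', hxj⟩
  have hGfmono : Monotone Gf := fun i i' hii' => Subgroup.closure_mono (hTmono hii')
  -- cardinality of initial segments
  have hIicμ : ∀ x : μ.ord.ToType, #{y : μ.ord.ToType | y ≤ x} < μ := by
    intro x
    have h1 : #{y : μ.ord.ToType | y < x} < μ := by
      have hc := Ordinal.card_typein (r := ((· < ·) : μ.ord.ToType → μ.ord.ToType → Prop)) x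
      have hlt : Ordinal.typein (α := μ.ord.ToType) (· < ·) x < μ.ord := by
        have := Ordinal.typein_lt_type (α := μ.ord.ToType) (· < ·) x
        rwa [Ordinal.type_toType] at this
    -- #{y // y < x} = card (typein) < μ
      have := (Cardinal.lt_ord.1 hlt)
      exact lt_of_eq_of_lt hc this
    have hsub : {y : μ.ord.ToType | y ≤ x} ⊆ insert x {y : μ.ord.ToType | y < x} := by
      intro y hy
      have hy' : y ≤ x := hy
      rcases lt_or_eq_of_le hy' with h' | h'
      · exact Set.mem_insert_of_mem _ h'
      · exact h' ▸ Set.mem_insert _ _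
    calc #{y : μ.ord.ToType | y ≤ x} ≤ #(insert x {y : μ.ord.ToType | y < x} : Set _) :=
          Cardinal.mk_le_mk_of_subset hsub
      _ ≤ #{y : μ.ord.ToType | y < x} + 1 := Cardinal.mk_insert_le
      _ < μ := Cardinal.add_lt_of_lt hμ0 h1 (one_lt_aleph0.trans haleph)
  have hIicθ : ∀ i : (μ.ord.cof).ord.ToType,
      #{j : (μ.ord.cof).ord.ToType | j ≤ i} < μ.ord.cof := by
    intro i
    have h1 : #{j : (μ.ord.cof).ord.ToType | j < i} < μ.ord.cof := by
      have hc := Ordinal.card_typein (r := ((· < ·) : (μ.ord.cof).ord.ToType → (μ.ord.cof).ord.ToType → Prop)) i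
      have hlt : Ordinal.typein (α := (μ.ord.cof).ord.ToType) (· < ·) i <
          (μ.ord.cof).ord := by
        have := Ordinal.typein_lt_type (α := (μ.ord.cof).ord.ToType) (· < ·) i
        rwa [Ordinal.type_toType] at this
      have := Cardinal.lt_ord.1 hlt
      exact lt_of_eq_of_lt hc this
    have hsub : {j : (μ.ord.cof).ord.ToType | j ≤ i} ⊆
        insert i {j : (μ.ord.cof).ord.ToType | j < i} := by
      intro j hj
      have hj' : j ≤ i := hj
      rcases lt_or_eq_of_le hj' with h' | h'
      · exact Set.mem_insert_of_mem _ h'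
      · exact h' ▸ Set.mem_insert _ _
    calc #{j : (μ.ord.cof).ord.ToType | j ≤ i}
        ≤ #(insert i {j : (μ.ord.cof).ord.ToType | j < i} : Set _) :=
          Cardinal.mk_le_mk_of_subset hsub
      _ ≤ #{j : (μ.ord.cof).ord.ToType | j < i} + 1 := Cardinal.mk_insert_le
      _ < μ.ord.cof := Cardinal.add_lt_of_lt hθ0 h1 (one_lt_aleph0.trans_le hθ0)
  -- each Gf i has cardinality < μ
  have hGflt : ∀ i, #(Gf i) < μ := by
    intro i
    set A : {j : (μ.ord.cof).ord.ToType | j ≤ i} → Set G :=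
      fun j => {x : G | e x ≤ g j.1} with hA
    have hTsub : T i ⊆ ⋃ j, A j := by
      intro x hx
      obtain ⟨j, hj, hxj⟩ := hx
      exact Set.mem_iUnion.2 ⟨⟨j, hj⟩, hxj⟩
    have hAlt : ∀ j, #(A j) < μ := by
      intro j
      have : A j = e ⁻¹' {y : μ.ord.ToType | y ≤ g j.1} := rfl
      rw [this]
      exact (Cardinal.mk_preimage_of_injective e _ e.injective).trans_lt (hIicμ _)
    have hsup : (⨆ j, #(A j)) < μ := Ordinal.iSup_lt (hIicθ i) hAlt
    have hTlt : #(T i) < μ := by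
      calc #(T i) ≤ #(⋃ j, A j) := Cardinal.mk_le_mk_of_subset hTsub
        _ ≤ #{j : (μ.ord.cof).ord.ToType | j ≤ i} * ⨆ j, #(A j) := Cardinal.mk_iUnion_le A
        _ < μ := Cardinal.mul_lt_of_lt hμ0 ((hIicθ i).trans hsing) hsup
    calc #(Gf i) ≤ max #(T i) ℵ₀ := mk_closure_le_of_locallyFinite hG (T i)
      _ < μ := max_lt hTlt haleph
  -- every indecomposable subgroup is contained in some Gf i
  have key : ∀ M : Subgroup G, GroupIndecomp μ.ord.cof ↥M → ∃ i, M ≤ Gf i := by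
    intro M hind
    set N : (μ.ord.cof).ord.ToType → Subgroup ↥M :=
      fun i => (Gf i).comap M.subtype with hN
    have hNmono : Monotone N := fun i i' hi => Subgroup.comap_mono (hGfmono hi)
    have hNsup : (⨆ i, N i) = ⊤ := by
      rw [eq_top_iff]
      intro m _
      obtain ⟨b, hbS, hb⟩ := hSunb (e (m : G))
      have hle : e (m : G) ≤ g (h.symm ⟨b, hbS⟩) := by
        rw [hg]
        simp only [Equiv.apply_symm_apply]
        exact hb
      have hmT : (m : G) ∈ T (h.symm ⟨b, hbS⟩) := ⟨h.symm ⟨b, hbS⟩, le_refl _, hle⟩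
      have hmN : m ∈ N (h.symm ⟨b, hbS⟩) := by
        rw [hN]
        exact Subgroup.mem_comap.2 (Subgroup.subset_closure hmT)
      exact (le_iSup N _) hmN
    obtain ⟨i, hi⟩ := hind N hNmono hNsup
    refine ⟨i, fun x hx => ?_⟩
    have : (⟨x, hx⟩ : ↥M) ∈ N i := hi ▸ Subgroup.mem_top _
    exact Subgroup.mem_comap.1 this
  -- counting
  set X := {M : Subgroup G // #M < μ ∧ GroupIndecomp μ.ord.cof ↥M} with hX
  have keyX : ∀ M : X, ∃ i, M.1 ≤ Gf i := fun M => key M.1 M.2.2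
  choose idx hidx using keyX
  have hinj : Function.Injective (fun M : X =>
      (⟨idx M, {x : ↥(Gf (idx M)) | (x : G) ∈ M.1}⟩ :
        Σ i : (μ.ord.cof).ord.ToType, Set ↥(Gf i))) := by
    intro M₁ M₂ hEq
    exact Subtype.ext (sigma_encode_inj Gf M₁.1 M₂.1 (idx M₁) (idx M₂)
      (hidx M₁) (hidx M₂) hEq)
  calc #X ≤ #(Σ i : (μ.ord.cof).ord.ToType, Set ↥(Gf i)) := Cardinal.mk_le_of_injective hinj
    _ = Cardinal.sum (fun i : (μ.ord.cof).ord.ToType => #(Set ↥(Gf i))) :=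
        Cardinal.mk_sigma _
    _ ≤ Cardinal.sum (fun _ : (μ.ord.cof).ord.ToType => μ) :=
        Cardinal.sum_le_sum _ _ (fun i => by
          rw [Cardinal.mk_set]
          exact (hsl.two_power_lt (hGflt i)).le)
    _ = #((μ.ord.cof).ord.ToType) * μ := Cardinal.sum_const' _ _
    _ = μ.ord.cof * μ := by rw [hmkθ]
    _ = μ := Cardinal.mul_eq_right hμ0 hsing.le
        (by exact ((aleph0_pos).trans_le hθ0).ne')
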